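/- arXiv:2601.22205 — 6 statements merged into one kernel-verified Lean document; each statement's English description precedes it below -/
import Mathlib

section
/- Let G be a finite group and H_1, H_2, H_3 subgroups such that H_i ∩ H_j = {e} for all i ≠ j and [G : H_i] = |H_i| = n for all i. Then the map L : G/H_1 × G/H_2 → G/H_3 defined by L(gH_1, gH_2) = gH_3 (using the bijection G ≃ G/H_1 × G/H_2) is a Latin square: for each fixed row gH_1, the map column ↦ symbol is a bijection, and for each fixed column gH_2, the map row ↦ symbol is a bijection. -/
lemma aux_exists_mul {G : Type*} [Group G] [Finite G] (H K : Subgroup G)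
    (hHK : H ⊓ K = ⊥) (hc : Nat.card H * Nat.card K = Nat.card G) (g : G) :
    ∃ h ∈ H, ∃ k ∈ K, g = h * k := by
  have hinj : Function.Injective (fun p : H × K => (p.1 : G) * p.2) := by
    rintro ⟨⟨h, hh⟩, ⟨k, hk⟩⟩ ⟨⟨h', hh'⟩, ⟨k', hk'⟩⟩ he
    simp only [Subtype.coe_mk] at he
    have key : h'⁻¹ * h = k' * k⁻¹ := by
      apply mul_left_cancel (a := h')
      apply mul_right_cancel (b := k)
      simpa [mul_assoc] using he
    have hm : h'⁻¹ * h ∈ H ⊓ K := by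
      refine ⟨mul_mem (H.inv_mem hh') hh, ?_⟩
      rw [key]; exact mul_mem hk' (K.inv_mem hk)
    rw [hHK, Subgroup.mem_bot] at hm
    have hhe : h = h' := by
      have := inv_mul_eq_one.mp hm
      exact this.symm
    subst hhe
    have hke : k = k' := mul_left_cancel he
    subst hke
    rfl
  have hbij : Function.Bijective (fun p : H × K => (p.1 : G) * p.2) := by
    rw [Nat.bijective_iff_injective_and_card]
    exact ⟨hinj, by simpa using hc⟩
  obtain ⟨⟨h, k⟩, hp⟩ := hbij.2 g
  exact ⟨h, h.2, k, k.2, hp.symm⟩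

lemma aux_quot_card {G : Type*} [Group G] [Finite G] (n : ℕ) (hn : 0 < n)
    (hG : Nat.card G = n ^ 2) (H : Subgroup G) (hH : Nat.card H = n) :
    Nat.card (G ⧸ H) = n := by
  have := Subgroup.card_eq_card_quotient_mul_card_subgroup H
  rw [hG, hH, sq] at this
  exact (Nat.eq_of_mul_eq_mul_right hn this.symm)

theorem stmt1 {G : Type*} [Group G] [Finite G] (n : ℕ)
    (hG : Nat.card G = n ^ 2)
    (H₁ H₂ H₃ : Subgroup G)
    (h1 : Nat.card H₁ = n) (h2 : Nat.card H₂ = n) (h3 : Nat.card H₃ = n)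
    (h12 : H₁ ⊓ H₂ = ⊥) (h13 : H₁ ⊓ H₃ = ⊥) (h23 : H₂ ⊓ H₃ = ⊥)
    (L : (G ⧸ H₁) × (G ⧸ H₂) → G ⧸ H₃)
    (hL : ∀ g : G, L ((g : G ⧸ H₁), (g : G ⧸ H₂)) = (g : G ⧸ H₃)) :
    (∀ r : G ⧸ H₁, Function.Bijective fun c : G ⧸ H₂ => L (r, c)) ∧
    (∀ c : G ⧸ H₂, Function.Bijective fun r : G ⧸ H₁ => L (r, c)) := by
  have hn : 0 < n := by
    have h := Nat.card_pos (α := G)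
    rw [hG] at h
    exact Nat.pos_of_ne_zero (by rintro rfl; simp at h)
  have hq1 := aux_quot_card n hn hG H₁ h1
  have hq2 := aux_quot_card n hn hG H₂ h2
  have hq3 := aux_quot_card n hn hG H₃ h3
  constructor
  · intro r
    rw [Nat.bijective_iff_surjective_and_card]
    refine ⟨?_, by rw [hq2, hq3]⟩
    intro s
    obtain ⟨g, rfl⟩ := QuotientGroup.mk_surjective r
    obtain ⟨k, rfl⟩ := QuotientGroup.mk_surjective s
    obtain ⟨a, ha, b, hb, hab⟩ :=
      aux_exists_mul H₁ H₃ h13 (by rw [h1, h3, ← sq, hG]) (g⁻¹ * k)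
    refine ⟨((g * a : G) : G ⧸ H₂), ?_⟩
    have hr1 : ((g * a : G) : G ⧸ H₁) = (g : G ⧸ H₁) := by
      rw [QuotientGroup.eq]
      simpa using ha
    have hr3 : ((g * a : G) : G ⧸ H₃) = (k : G ⧸ H₃) := by
      rw [QuotientGroup.eq]
      have : (g * a)⁻¹ * k = a⁻¹ * (g⁻¹ * k) := by group
      rw [this, hab]
      simpa using hb
    simp only
    rw [← hr1, hL (g * a), hr3]
  · intro c
    rw [Nat.bijective_iff_surjective_and_card]
    refine ⟨?_, by rw [hq1, hq3]⟩
    intro s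
    obtain ⟨g, rfl⟩ := QuotientGroup.mk_surjective c
    obtain ⟨k, rfl⟩ := QuotientGroup.mk_surjective s
    obtain ⟨a, ha, b, hb, hab⟩ :=
      aux_exists_mul H₂ H₃ h23 (by rw [h2, h3, ← sq, hG]) (g⁻¹ * k)
    refine ⟨((g * a : G) : G ⧸ H₁), ?_⟩
    have hr2 : ((g * a : G) : G ⧸ H₂) = (g : G ⧸ H₂) := by
      rw [QuotientGroup.eq]
      simpa using ha
    have hr3 : ((g * a : G) : G ⧸ H₃) = (k : G ⧸ H₃) := by
      rw [QuotientGroup.eq]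
      have : (g * a)⁻¹ * k = a⁻¹ * (g⁻¹ * k) := by group
      rw [this, hab]
      simpa using hb
    simp only
    rw [← hr2, hL (g * a), hr3]
end

section
/- Let G be a finite group, and let H_1, …, H_{q+2} be subgroups with pairwise intersection equal to a common subgroup K, where [G : H_i] = [H_i : K] = n for all i. Suppose p is a prime with p^a dividing n, p^{a+1} not dividing n, and p not dividing |K|. Then there exist a Sylow p-subgroup P of G of order p^{2a} and subgroups Q_1, …, Q_{q+2} of P, each of order p^a, with Q_i ∩ Q_j trivial for i ≠ j. -/
open Subgroup

namespace Stmt4Aux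

variable {G : Type*} [Group G]

/-- Conjugate of a subgroup. -/
def conjS (g : G) (S : Subgroup G) : Subgroup G := S.map (MulAut.conj g).toMonoidHom

lemma mem_conjS {g x : G} {S : Subgroup G} : x ∈ conjS g S ↔ g⁻¹ * x * g ∈ S := by
  rw [conjS, Subgroup.mem_map_equiv]
  simp [mul_assoc]

lemma conjS_mul (g h : G) (S : Subgroup G) : conjS (g * h) S = conjS g (conjS h S) := by
  ext x
  simp only [mem_conjS, mul_inv_rev, mul_assoc]

lemma conjS_self {h : G} {S : Subgroup G} (hh : h ∈ S) : conjS h S = S := by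
  ext x
  simp only [mem_conjS]
  constructor
  · intro hx
    have := S.mul_mem (S.mul_mem hh hx) (S.inv_mem hh)
    simpa [mul_assoc] using this
  · intro hx
    exact S.mul_mem (S.mul_mem (S.inv_mem hh) hx) hh

lemma conjS_inf (g : G) (S T : Subgroup G) : conjS g (S ⊓ T) = conjS g S ⊓ conjS g T := by
  ext x; simp [mem_conjS, Subgroup.mem_inf]

lemma card_conjS (g : G) (S : Subgroup G) : Nat.card (conjS g S) = Nat.card S :=
  (Nat.card_congr (S.equivMapOfInjective _ (MulAut.conj g).injective).toEquiv).symm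

lemma conjS_mono (g : G) {S T : Subgroup G} (h : S ≤ T) : conjS g S ≤ conjS g T :=
  Subgroup.map_mono h

lemma sylow_smul_coe {p : ℕ} [Fact p.Prime] (g : G) (R : Sylow p G) :
    ((g • R : Sylow p G) : Subgroup G) = conjS g R := by
  rfl

end Stmt4Aux

open Stmt4Aux

theorem stmt4 {G : Type*} [Group G] [Finite G] (n q a p : ℕ) [Fact p.Prime]
    (H : Fin (q + 2) → Subgroup G) (K : Subgroup G)
    (hK : ∀ i j, i ≠ j → H i ⊓ H j = K)
    (hidx : ∀ i, (H i).index = n)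
    (hidx' : ∀ i, (K.subgroupOf (H i)).index = n)
    (hpa : p ^ a ∣ n) (hpa' : ¬ p ^ (a + 1) ∣ n) (hpK : ¬ p ∣ Nat.card K) :
    ∃ P : Sylow p G, Nat.card P = p ^ (2 * a) ∧
      ∃ Q : Fin (q + 2) → Subgroup G,
        (∀ i, Q i ≤ (P : Subgroup G)) ∧ (∀ i, Nat.card (Q i) = p ^ a) ∧
        ∀ i j, i ≠ j → Q i ⊓ Q j = ⊥ := by
  have hp : p.Prime := Fact.out
  have hn : n ≠ 0 := by
    rintro rfl
    exact hpa' (dvd_zero _)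
  have hcK : Nat.card K ≠ 0 := Nat.card_pos.ne'
  -- K ≤ H i
  have hKle : ∀ i, K ≤ H i := by
    intro i
    obtain ⟨j, hj⟩ := exists_ne i
    rw [← hK i j (Ne.symm hj)]
    exact inf_le_left
  -- card of H i
  have hcardH : ∀ i, Nat.card (H i) = n * Nat.card K := by
    intro i
    have h1 := Subgroup.index_mul_card (K.subgroupOf (H i))
    rw [hidx' i] at h1
    rw [← h1, Nat.card_congr (Subgroup.subgroupOfEquivOfLe (hKle i)).toEquiv]
  -- card of G
  have hcardG : Nat.card G = n * (n * Nat.card K) := by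
    have h1 := Subgroup.index_mul_card (H 0)
    rw [hidx 0, hcardH 0] at h1
    exact h1.symm
  -- factorizations
  have hfn : n.factorization p = a := by
    have h1 : a ≤ n.factorization p :=
      (Nat.Prime.pow_dvd_iff_le_factorization hp hn).mp hpa
    have h2 : ¬ (a + 1 ≤ n.factorization p) := fun h =>
      hpa' ((Nat.Prime.pow_dvd_iff_le_factorization hp hn).mpr h)
    omega
  have hfK : (Nat.card K).factorization p = 0 := Nat.factorization_eq_zero_of_not_dvd hpK
  have hfH : ∀ i, (Nat.card (H i)).factorization p = a := by
    intro i
    rw [hcardH i, Nat.factorization_mul hn hcK, Finsupp.add_apply, hfn, hfK]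
    omega
  have hfG : (Nat.card G).factorization p = 2 * a := by
    rw [hcardG, Nat.factorization_mul hn (by positivity),
      Nat.factorization_mul hn hcK, Finsupp.add_apply, Finsupp.add_apply, hfn, hfK]
    ring
  -- the Sylow subgroup of G
  obtain ⟨P⟩ : Nonempty (Sylow p G) := inferInstance
  have hcardP : Nat.card P = p ^ (2 * a) := by
    rw [P.card_eq_multiplicity, hfG]
  refine ⟨P, hcardP, ?_⟩
  -- surjectivity: G = H j * H i for i ≠ j
  have hsurj : ∀ i j : Fin (q + 2), i ≠ j → ∀ g : G,
      ∃ b ∈ H j, ∃ c ∈ H i, g = b * c := by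
    intro i j hij g
    let f : (H j) ⧸ ((H i).subgroupOf (H j)) → G ⧸ (H i) :=
      fun x => Quotient.liftOn' x (fun b => ((b : G) : G ⧸ H i)) (by
        intro b₁ b₂ hb
        rw [QuotientGroup.leftRel_apply] at hb
        refine (QuotientGroup.eq).mpr ?_
        simpa [Subgroup.mem_subgroupOf] using hb)
    have hinj : Function.Injective f := by
      intro x y
      induction x, y using Quotient.inductionOn₂' with
      | h b₁ b₂ =>
        intro h
        have h' : (b₁ : G)⁻¹ * b₂ ∈ H i := (QuotientGroup.eq).mp h
        refine Quotient.sound' ?_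
        rw [QuotientGroup.leftRel_apply]
        simpa [Subgroup.mem_subgroupOf] using h'
    have hcard1 : Nat.card ((H j) ⧸ ((H i).subgroupOf (H j))) = n := by
      have hrel : (H i).relIndex (H j) = n := by
        rw [← Subgroup.inf_relIndex_right, hK i j hij]
        exact hidx' j
      simpa [Subgroup.relIndex, Subgroup.index] using hrel
    have hcard2 : Nat.card (G ⧸ H i) = n := hidx i
    have hbij : Function.Bijective f :=
      (Nat.bijective_iff_injective_and_card f).mpr ⟨hinj, by rw [hcard1, hcard2]⟩
    obtain ⟨x, hx⟩ := hbij.surjective (g : G ⧸ H i)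
    obtain ⟨b, rfl⟩ := Quotient.exists_rep x
    have h' : (b : G)⁻¹ * g ∈ H i := (QuotientGroup.eq).mp hx
    exact ⟨b, b.2, (b : G)⁻¹ * g, h', by group⟩
  -- key lemma: intersection of conjugates is a conjugate of K
  have hkey : ∀ (i j : Fin (q + 2)), i ≠ j → ∀ x y : G,
      ∃ z : G, conjS x (H i) ⊓ conjS y (H j) = conjS z K := by
    intro i j hij x y
    obtain ⟨b, hb, c, hc, hbc⟩ := hsurj i j hij (y⁻¹ * x)
    refine ⟨y * b, ?_⟩
    have hx : x = (y * b) * c := by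
      rw [mul_assoc, ← hbc]
      group
    have h2 : conjS y (H j) = conjS (y * b) (H j) := by
      rw [conjS_mul, conjS_self hb]
    rw [hx, conjS_mul, conjS_self hc, h2, ← conjS_inf, hK i j hij]
  -- construct the Q i
  have hQex : ∀ i : Fin (q + 2), ∃ Qi : Subgroup G,
      Qi ≤ (P : Subgroup G) ∧ Nat.card Qi = p ^ a ∧
      ∃ g : G, Qi ≤ conjS g (H i) := by
    intro i
    obtain ⟨T⟩ : Nonempty (Sylow p (H i)) := inferInstance
    have hcardT : Nat.card T = p ^ a := by
      rw [T.card_eq_multiplicity, hfH i]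
    set S : Subgroup G := (T : Subgroup (H i)).map (H i).subtype with hS
    have hcardS : Nat.card S = p ^ a := by
      rw [← hcardT]
      exact (Nat.card_congr ((T : Subgroup (H i)).equivMapOfInjective _
        (H i).subtype_injective).toEquiv).symm
    have hSH : S ≤ H i := Subgroup.map_subtype_le _
    have hSp : IsPGroup p S := T.isPGroup'.map _
    obtain ⟨R, hR⟩ := hSp.exists_le_sylow
    obtain ⟨g, hg⟩ := MulAction.exists_smul_eq G R P
    refine ⟨conjS g S, ?_, ?_, g, conjS_mono g hSH⟩
    · have : conjS g S ≤ conjS g R := conjS_mono g hR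
      rwa [← sylow_smul_coe, hg] at this
    · rw [card_conjS, hcardS]
  choose Q hQP hQcard g hQH using hQex
  refine ⟨Q, hQP, hQcard, ?_⟩
  intro i j hij
  obtain ⟨z, hz⟩ := hkey i j hij (g i) (g j)
  have hle : Q i ⊓ Q j ≤ conjS z K := by
    rw [← hz]
    exact inf_le_inf (hQH i) (hQH j)
  have hdvd : Nat.card (Q i ⊓ Q j : Subgroup G) ∣ Nat.card K := by
    have := Subgroup.card_dvd_of_le hle
    rwa [card_conjS] at this
  have hQip : IsPGroup p (Q i) := IsPGroup.of_card (hQcard i)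
  have hQijp : IsPGroup p (Q i ⊓ Q j : Subgroup G) := hQip.to_le inf_le_left
  obtain ⟨k, hk⟩ := IsPGroup.iff_card.mp hQijp
  rw [← Subgroup.card_eq_one, hk]
  rcases Nat.eq_zero_or_pos k with hk0 | hk0
  · rw [hk0, pow_zero]
  · exfalso
    apply hpK
    exact dvd_trans (dvd_pow_self p hk0.ne') (hk ▸ hdvd)
end

section
/- Let G be a group, and let (α, β, γ) be a triple of permutations of G satisfying γ(xy) = α(x)β(y) for all x, y ∈ G. Then the map φ : G → G defined by φ(z) = α(e)⁻¹ · γ(z) · β(e)⁻¹ is a group automorphism of G. -/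
theorem stmt8 {G : Type*} [Group G] (α β γ : Equiv.Perm G)
    (h : ∀ x y : G, γ (x * y) = α x * β y) :
    ∃ φ : G ≃* G, ∀ z : G, φ z = (α 1)⁻¹ * γ z * (β 1)⁻¹ := by
  have hα : ∀ z : G, α z = γ z * (β 1)⁻¹ := by
    intro z; have := h z 1; rw [mul_one] at this; rw [this]; group
  have hβ : ∀ z : G, β z = (α 1)⁻¹ * γ z := by
    intro z; have := h 1 z; rw [one_mul] at this; rw [this]; group
  refine ⟨{ toEquiv := γ.trans ((Equiv.mulLeft ((α 1)⁻¹)).trans (Equiv.mulRight ((β 1)⁻¹)))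
            map_mul' := ?_ }, fun z => rfl⟩
  intro x y
  show (α 1)⁻¹ * γ (x*y) * (β 1)⁻¹ = ((α 1)⁻¹ * γ x * (β 1)⁻¹) * ((α 1)⁻¹ * γ y * (β 1)⁻¹)
  rw [h x y, hα x, hβ y]
  group
end

section
/- Let G be a group, L its Cayley table, and K(x,y) = x·μ(y) for a bijection μ : G → G with μ(e) = e. If (α, β, γ, δ) is an autotopy of the pair (L, K) — that is, γ(xy) = α(x)β(y) and δ(x·μ(y)) = α(x)·μ(β(y)) for all x, y — then writing (α, β, γ) = (aφ, φ(·)b⁻¹, aφ(·)b⁻¹) with φ ∈ Aut(G), the automorphism φ satisfies φ(μ(y))·μ(b⁻¹) = μ(φ(y)·b⁻¹) for all y ∈ G, and δ(z) = a·φ(z)·μ(b⁻¹). -/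
theorem stmt9 {G : Type*} [Group G] (μ : Equiv.Perm G) (hμ : μ 1 = 1)
    (α β γ δ : Equiv.Perm G) (a b : G) (φ : G ≃* G)
    (hα : ∀ x, α x = a * φ x) (hβ : ∀ y, β y = φ y * b⁻¹)
    (hγ : ∀ z, γ z = a * φ z * b⁻¹)
    (h1 : ∀ x y : G, γ (x * y) = α x * β y)
    (h2 : ∀ x y : G, δ (x * μ y) = α x * μ (β y)) :
    (∀ y : G, φ (μ y) * μ b⁻¹ = μ (φ y * b⁻¹)) ∧
      ∀ z : G, δ z = a * φ z * μ b⁻¹ := by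
  have hδ : ∀ z : G, δ z = a * φ z * μ b⁻¹ := by
    intro z
    have := h2 z 1
    simpa [hμ, hα, hβ, mul_assoc] using this
  refine ⟨fun y => ?_, hδ⟩
  have := h2 1 y
  rw [hδ, hα, hβ] at this
  simpa [mul_assoc, mul_left_cancel_iff] using this
end

section
/- Let G be a finite group with a normal Sylow p-subgroup P, and let (G, H_1, …, H_{q+2}, K) be a group packet with [G : H_i] = [H_i : K] = n, where p^a ∣ n and p^{a+1} ∤ n. Setting P_i = H_i ∩ P and P_K = K ∩ P, the tuple (P, P_1, …, P_{q+2}, P_K) satisfies P_i ∩ P_j = P_K for all i ≠ j, [P : P_i] = p^a, and [P_i : P_K] = p^a. -/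
open Subgroup

lemma aux13 {G : Type*} [Group G] [Finite G] (p a : ℕ) [Fact p.Prime]
    (P : Sylow p G) (hP : (P : Subgroup G).Normal) (n : ℕ) (H : Subgroup G)
    (hidx : H.index = n) (hpa : p ^ a ∣ n) (hpa' : ¬ p ^ (a + 1) ∣ n) :
    H.relIndex (P : Subgroup G) = p ^ a := by
  have hp1 : 1 < p := (Fact.out : p.Prime).one_lt
  set m := H.relIndex (P : Subgroup G) with hm
  set r := (P : Subgroup G).relIndex H with hr
  -- m is a power of p
  obtain ⟨k, hk⟩ := IsPGroup.iff_card.mp P.2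
  have hmdvd : m ∣ p ^ k := hk ▸ (H.subgroupOf (P : Subgroup G)).index_dvd_card
  obtain ⟨b, hble, hb⟩ := (Nat.dvd_prime_pow Fact.out).mp hmdvd
  -- key equation : r * n = m * P.index
  have key : r * n = m * (P : Subgroup G).index := by
    have h1 : (H ⊓ (P : Subgroup G)).relIndex H * H.index = (H ⊓ (P : Subgroup G)).index :=
      relIndex_mul_index inf_le_left
    have h2 : (H ⊓ (P : Subgroup G)).relIndex (P : Subgroup G) * (P : Subgroup G).index
        = (H ⊓ (P : Subgroup G)).index := relIndex_mul_index inf_le_right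
    rw [inf_relIndex_left] at h1
    rw [inf_relIndex_right] at h2
    rw [hidx] at h1
    exact h1.trans h2.symm
  haveI := hP
  have hrdvd : r ∣ (P : Subgroup G).index := relIndex_dvd_index_of_normal (P : Subgroup G) H
  have hPnotdvd : ¬ p ∣ (P : Subgroup G).index := P.not_dvd_index
  have hpr : ¬ p ∣ r := fun h => hPnotdvd (h.trans hrdvd)
  -- p^a ∣ m
  have h1 : p ^ a ∣ m := by
    have : p ^ a ∣ m * (P : Subgroup G).index := key ▸ (hpa.mul_left r)
    exact (Nat.Coprime.pow_left a
      ((Nat.Prime.coprime_iff_not_dvd Fact.out).mpr hPnotdvd)).dvd_of_dvd_mul_right this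
  -- m ∣ n (up to coprime part)
  have h2 : m ∣ n := by
    have : m ∣ r * n := key ▸ Dvd.intro _ rfl
    rw [hb] at this ⊢
    rw [mul_comm] at this
    exact (Nat.Coprime.pow_left b
      ((Nat.Prime.coprime_iff_not_dvd Fact.out).mpr hpr)).dvd_of_dvd_mul_right this
  have hab : a ≤ b := (Nat.pow_dvd_pow_iff_le_right hp1).mp (hb ▸ h1)
  have hba : b ≤ a := by
    by_contra h
    exact hpa' ((pow_dvd_pow p (by omega)).trans (hb ▸ h2))
  rw [hb, le_antisymm hba hab]

theorem stmt13 {G : Type*} [Group G] [Finite G] (p n a q : ℕ) [Fact p.Prime]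
    (P : Sylow p G) (hP : (P : Subgroup G).Normal)
    (H : Fin (q + 2) → Subgroup G) (K : Subgroup G)
    (hK : ∀ i j, i ≠ j → H i ⊓ H j = K)
    (hidx : ∀ i, (H i).index = n)
    (hidx' : ∀ i, (K.subgroupOf (H i)).index = n)
    (hpa : p ^ a ∣ n) (hpa' : ¬ p ^ (a + 1) ∣ n) :
    (∀ i j, i ≠ j → (H i ⊓ (P : Subgroup G)) ⊓ (H j ⊓ (P : Subgroup G)) = K ⊓ (P : Subgroup G)) ∧
    (∀ i, ((H i ⊓ (P : Subgroup G)).subgroupOf (P : Subgroup G)).index = p ^ a) ∧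
    (∀ i, ((K ⊓ (P : Subgroup G)).subgroupOf (H i ⊓ (P : Subgroup G))).index = p ^ a) := by
  have hp0 : (p : ℕ) ^ a ≠ 0 := pow_ne_zero a (Fact.out : p.Prime).pos.ne'
  have hKle : ∀ i, K ≤ H i := by
    intro i
    obtain ⟨j, hj⟩ : ∃ j, j ≠ i := exists_ne i
    exact (hK i j (Ne.symm hj)) ▸ inf_le_left
  have part2 : ∀ i, ((H i ⊓ (P : Subgroup G)).subgroupOf (P : Subgroup G)).index = p ^ a := by
    intro i
    have : (H i ⊓ (P : Subgroup G)).relIndex (P : Subgroup G) = p ^ a := by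
      rw [inf_relIndex_right]
      exact aux13 p a P hP n (H i) (hidx i) hpa hpa'
    exact this
  refine ⟨?_, part2, ?_⟩
  · intro i j hij
    rw [inf_inf_inf_comm, inf_idem, hK i j hij]
  · intro i
    -- K.index = n * n
    have hKidx : K.index = n * n := by
      have := Subgroup.relIndex_mul_index (hKle i)
      rw [Subgroup.relIndex, hidx' i, hidx i] at this
      exact this.symm
    have hK2a : K.relIndex (P : Subgroup G) = p ^ a * p ^ a := by
      rw [← pow_add]
      refine aux13 p (a + a) P hP (n * n) K hKidx (pow_add p a a ▸ mul_dvd_mul hpa hpa) ?_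
      intro hdvd
      -- p^(2a+1) ∣ n^2 implies p^(a+1) ∣ n
      apply hpa'
      have hn0 : n ≠ 0 := by
        rintro rfl
        simp at hdvd
        exact hpa' (dvd_zero _)
      have hfac : (a + a) + 1 ≤ (n * n).factorization p :=
        (Nat.Prime.pow_dvd_iff_le_factorization Fact.out (by positivity)).mp hdvd
      rw [Nat.factorization_mul hn0 hn0] at hfac
      have : a + 1 ≤ n.factorization p := by simp at hfac; omega
      exact (Nat.Prime.pow_dvd_iff_le_factorization Fact.out hn0).mpr this
    have hKP : K ⊓ (P : Subgroup G) ≤ H i ⊓ (P : Subgroup G) :=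
      inf_le_inf_right _ (hKle i)
    have hmul : (K ⊓ (P : Subgroup G)).relIndex (H i ⊓ (P : Subgroup G)) *
        (H i ⊓ (P : Subgroup G)).relIndex (P : Subgroup G) =
        (K ⊓ (P : Subgroup G)).relIndex (P : Subgroup G) :=
      relIndex_mul_relIndex _ _ _ hKP inf_le_right
    rw [show (H i ⊓ (P : Subgroup G)).relIndex (P : Subgroup G) = p ^ a from part2 i,
      inf_relIndex_right, hK2a] at hmul
    show (K ⊓ (P : Subgroup G)).relIndex (H i ⊓ (P : Subgroup G)) = p ^ a
    exact Nat.eq_of_mul_eq_mul_right (Nat.pos_of_ne_zero hp0) hmul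
end

section
/- Let G be a group of order n² with three subgroups H_1, H_2, H_3 of order n pairwise intersecting trivially, and suppose additionally that H_1 and H_2 are normal in G. Then G is isomorphic to H_1 × H_2, and the Latin square L : G/H_1 × G/H_2 → G/H_3 defined by L(gH_1, gH_2) = gH_3 is isotopic to the Cayley table of H_2 (equivalently, of G/H_1): identifying G/H_1 ≅ H_2, G/H_2 ≅ H_1, and using that H_3 projects bijectively to both factors, L(h_2H_1, h_1H_2) = h_1h_2H_3 corresponds to a group multiplication. -/
private lemma bij_coe_quot {G : Type*} [Group G] [Finite G] (H K : Subgroup G)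
    (hHK : H ⊓ K = ⊥) (hc : Nat.card H = Nat.card (G ⧸ K)) :
    Function.Bijective (fun x : H => ((x : G) : G ⧸ K)) := by
  rw [Nat.bijective_iff_injective_and_card]
  refine ⟨fun x y hxy => ?_, hc⟩
  have hxy' : (x : G)⁻¹ * (y : G) ∈ K := QuotientGroup.eq.mp hxy
  have hx : (x : G)⁻¹ * (y : G) ∈ H := H.mul_mem (H.inv_mem x.2) y.2
  have hmem : (x : G)⁻¹ * (y : G) ∈ H ⊓ K := ⟨hx, hxy'⟩
  rw [hHK, Subgroup.mem_bot] at hmem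
  exact Subtype.ext (inv_mul_eq_one.mp hmem)

theorem stmt17 {G : Type*} [Group G] [Finite G] (n : ℕ)
    (hG : Nat.card G = n ^ 2)
    (H₁ H₂ H₃ : Subgroup G) [H₁.Normal] [H₂.Normal]
    (h1 : Nat.card H₁ = n) (h2 : Nat.card H₂ = n) (h3 : Nat.card H₃ = n)
    (h12 : H₁ ⊓ H₂ = ⊥) (h13 : H₁ ⊓ H₃ = ⊥) (h23 : H₂ ⊓ H₃ = ⊥) :
    Nonempty (G ≃* H₁ × H₂) ∧
    ∀ L : (G ⧸ H₁) × (G ⧸ H₂) → G ⧸ H₃,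
      (∀ g : G, L ((g : G ⧸ H₁), (g : G ⧸ H₂)) = (g : G ⧸ H₃)) →
      ∃ (ea : (G ⧸ H₁) ≃ (G ⧸ H₁)) (eb : (G ⧸ H₂) ≃ (G ⧸ H₁))
        (ec : (G ⧸ H₃) ≃ (G ⧸ H₁)),
        ∀ r c, ec (L (r, c)) = ea r * eb c := by
  have hn : n ≠ 0 := by
    rintro rfl
    have := Nat.card_pos (α := G)
    rw [hG] at this
    simp at this
  have hd12 : Disjoint H₁ H₂ := disjoint_iff.mpr h12
  have hcomm : ∀ x ∈ H₁, ∀ y ∈ H₂, x * y = y * x := fun x hx y hy =>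
    Subgroup.commute_of_normal_of_disjoint H₁ H₂ ‹_› ‹_› hd12 x y hx hy
  have hcompl : Subgroup.IsComplement' H₁ H₂ :=
    Subgroup.isComplement'_of_card_mul_and_disjoint
      (by rw [h1, h2, hG, sq]) hd12
  have hcompl' : Subgroup.IsComplement' H₂ H₁ :=
    Subgroup.isComplement'_of_card_mul_and_disjoint
      (by rw [h1, h2, hG, sq, Nat.mul_comm]) hd12.symm
  -- quotient cardinalities
  have hq : ∀ K : Subgroup G, Nat.card K = n → Nat.card K = Nat.card (G ⧸ K) := by
    intro K hK
    have := Subgroup.card_eq_card_quotient_mul_card_subgroup K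
    rw [hG, hK, sq] at this
    rw [hK]
    exact Nat.eq_of_mul_eq_mul_right (Nat.pos_of_ne_zero hn) this
  -- the three bijections
  have b21 : Function.Bijective (fun x : H₂ => ((x : G) : G ⧸ H₁)) :=
    bij_coe_quot H₂ H₁ (by rw [inf_comm, h12]) (by rw [h2, ← h1]; exact hq H₁ h1)
  have b23 : Function.Bijective (fun x : H₂ => ((x : G) : G ⧸ H₃)) :=
    bij_coe_quot H₂ H₃ h23 (by rw [h2, ← h3]; exact hq H₃ h3)
  have b12 : Function.Bijective (fun x : H₁ => ((x : G) : G ⧸ H₂)) :=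
    bij_coe_quot H₁ H₂ h12 (by rw [h1, ← h2]; exact hq H₂ h2)
  have b13 : Function.Bijective (fun x : H₁ => ((x : G) : G ⧸ H₃)) :=
    bij_coe_quot H₁ H₃ h13 (by rw [h1, ← h3]; exact hq H₃ h3)
  set e21 : H₂ ≃ (G ⧸ H₁) := Equiv.ofBijective _ b21 with he21
  set e23 : H₂ ≃ (G ⧸ H₃) := Equiv.ofBijective _ b23 with he23
  set e12 : H₁ ≃ (G ⧸ H₂) := Equiv.ofBijective _ b12 with he12
  set e13 : H₁ ≃ (G ⧸ H₃) := Equiv.ofBijective _ b13 with he13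
  constructor
  · -- G ≃* H₁ × H₂
    have hmul : ∀ p q : H₁ × H₂,
        ((p * q).1 : G) * ((p * q).2 : G) = ((p.1 : G) * (p.2 : G)) * ((q.1 : G) * (q.2 : G)) := by
      rintro ⟨a₁, b₁⟩ ⟨a₂, b₂⟩
      simp only [Prod.mk_mul_mk, Subgroup.coe_mul]
      have h := hcomm (a₂ : G) a₂.2 (b₁ : G) b₁.2
      simp only [mul_assoc]
      congr 1
      rw [← mul_assoc, h, mul_assoc]
    have hb : Function.Bijective
        (MonoidHom.mk' (fun p : H₁ × H₂ => (p.1 : G) * (p.2 : G)) hmul) := hcompl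
    exact ⟨(MulEquiv.ofBijective _ hb).symm⟩
  · intro L hL
    set eb : (G ⧸ H₂) ≃ (G ⧸ H₁) :=
      e12.symm.trans ((Equiv.inv H₁).trans (e13.trans
        ((e23.symm.trans e21).trans (Equiv.inv (G ⧸ H₁))))) with heb
    refine ⟨Equiv.refl _, eb, e23.symm.trans e21, ?_⟩
    have key : ∀ g : G,
        (e23.symm.trans e21) ((g : G ⧸ H₃)) =
          ((g : G ⧸ H₁)) * eb ((g : G ⧸ H₂)) := by
      intro g
      obtain ⟨⟨b0, a0⟩, hba⟩ := hcompl'.2 g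
      set b : H₂ := ⟨b0.1, b0.2⟩ with hbdef
      set a : H₁ := ⟨a0.1, a0.2⟩ with hadef
      have hba : (b : G) * (a : G) = g := hba
      set k : H₂ := e23.symm (((a : G)⁻¹ : G) : G ⧸ H₃) with hkdef
      have hk : (((k : G)) : G ⧸ H₃) = (((a : G)⁻¹ : G) : G ⧸ H₃) :=
        e23.apply_symm_apply _
      have hk' : (k : G)⁻¹ * (a : G)⁻¹ ∈ H₃ := QuotientGroup.eq.mp hk
      -- value of e23.symm at g
      have hsy : e23.symm ((g : G ⧸ H₃)) =
          ⟨(b : G) * (k : G)⁻¹, H₂.mul_mem b.2 (H₂.inv_mem k.2)⟩ := by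
        rw [Equiv.symm_apply_eq]
        show ((g : G ⧸ H₃)) = (((b : G) * (k : G)⁻¹ : G) : G ⧸ H₃)
        rw [QuotientGroup.eq]
        have hstep : g⁻¹ * ((b : G) * (k : G)⁻¹) = (a : G)⁻¹ * (k : G)⁻¹ := by
          rw [← hba]; group
        rw [hstep, hcomm (a : G)⁻¹ (H₁.inv_mem a.2) (k : G)⁻¹ (H₂.inv_mem k.2)]
        exact hk'
      -- LHS
      have hLHS : (e23.symm.trans e21) ((g : G ⧸ H₃)) =
          ((b : G) : G ⧸ H₁) * (((k : G) : G ⧸ H₁))⁻¹ := by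
        rw [Equiv.trans_apply, hsy]
        show (((b : G) * (k : G)⁻¹ : G) : G ⧸ H₁) = _
        rw [QuotientGroup.mk_mul, QuotientGroup.mk_inv]
      -- the two projections of g
      have hgH1 : ((g : G ⧸ H₁)) = ((b : G) : G ⧸ H₁) := by
        rw [← hba, QuotientGroup.mk_mul,
          (QuotientGroup.eq_one_iff (a : G)).mpr a.2, mul_one]
      have hgH2 : ((g : G ⧸ H₂)) = ((a : G) : G ⧸ H₂) := by
        rw [← hba, QuotientGroup.mk_mul,
          (QuotientGroup.eq_one_iff (b : G)).mpr b.2, one_mul]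
      -- value of eb at g
      have h12s : e12.symm (((a : G)) : G ⧸ H₂) = a := by
        rw [Equiv.symm_apply_eq]; rfl
      have h23s : e23.symm (((a : G)⁻¹ : G) : G ⧸ H₃) = k := rfl
      have hEB : eb ((g : G ⧸ H₂)) = (((k : G) : G ⧸ H₁))⁻¹ := by
        rw [hgH2, heb]
        simp only [Equiv.trans_apply, h12s]
        show ((e23.symm.trans e21) ((((a⁻¹ : H₁) : G)) : G ⧸ H₃))⁻¹ = _
        rw [Equiv.trans_apply]
        have : ((((a⁻¹ : H₁) : G)) : G ⧸ H₃) = (((a : G)⁻¹ : G) : G ⧸ H₃) := by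
          norm_cast
        rw [this, h23s]
        rfl
      rw [hLHS, hgH1, hEB]
    intro r c
    obtain ⟨g₁, rfl⟩ := QuotientGroup.mk_surjective r
    obtain ⟨g₂, rfl⟩ := QuotientGroup.mk_surjective c
    obtain ⟨⟨b0, a0⟩, hba⟩ := hcompl'.2 (g₂⁻¹ * g₁)
    have hba' : (b0.1 : G) * a0.1 = g₂⁻¹ * g₁ := hba
    have hgg : g₁ = (g₂ * b0.1) * a0.1 := by
      rw [mul_assoc, hba', mul_inv_cancel_left]
    set g : G := g₂ * b0.1 with hgdef
    have hg1 : ((g : G ⧸ H₁)) = ((g₁ : G) : G ⧸ H₁) := by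
      rw [QuotientGroup.eq]
      have hx : g⁻¹ * g₁ = a0.1 := by rw [hgg, hgdef]; group
      rw [hx]; exact a0.2
    have hg2 : ((g : G ⧸ H₂)) = ((g₂ : G) : G ⧸ H₂) := by
      rw [QuotientGroup.eq]
      have hx : g⁻¹ * g₂ = (b0.1 : G)⁻¹ := by rw [hgdef]; group
      rw [hx]; exact H₂.inv_mem b0.2
    rw [← hg1, ← hg2, hL g]
    simpa using key g
end
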